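/- If H ⊑ G (H is strongly embedded in G), then H ⊑* G. -/

import Mathlib

open scoped Classical

/-- A combinatorial pregeometry (matroid) on the ground type `α`, given by a
dimension (rank) function on finite subsets. -/
structure Pregeometry (α : Type*) [DecidableEq α] where
  dim : Finset α → ℕ
  dim_empty : dim ∅ = 0
  dim_le_insert : ∀ (A : Finset α) (x : α), dim A ≤ dim (insert x A)
  insert_le_dim : ∀ (A : Finset α) (x : α), dim (insert x A) ≤ dim A + 1
  submodular : ∀ A B : Finset α, dim (A ∪ B) + dim (A ∩ B) ≤ dim A + dim B

namespace Pregeometry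

variable {α : Type*} [DecidableEq α] (G : Pregeometry α)

/-- Closure of an arbitrary subset. -/
def cl (Y : Set α) : Set α :=
  {x | ∃ A : Finset α, ↑A ⊆ Y ∧ G.dim (insert x A) = G.dim A}

/-- `Y` is closed (in the ambient pregeometry `G`). -/
def IsClosed (Y : Set α) : Prop := G.cl Y = Y

/-- `X` is a closed set of the subpregeometry of `G` induced on `P`
(whose closure operator is `Y ↦ cl Y ∩ P`). -/
def IsClosedIn (P X : Set α) : Prop := X ⊆ P ∧ G.cl X ∩ P = X

/-- Dimension of an arbitrary subset, with value `⊤` when infinite-dimensional. -/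
noncomputable def edim (Y : Set α) : ℕ∞ :=
  ⨆ (A : Finset α) (_ : ↑A ⊆ Y), (G.dim A : ℕ∞)

/-- The (natural number) dimension of a finite-dimensional subset. -/
noncomputable def sdim (Y : Set α) : ℕ := (G.edim Y).toNat

/-- The alternating inclusion–exclusion sum
`Δ_G(Σ) = Σ_{∅ ≠ S ⊆ Σ} (-1)^{|S|+1} d(⋂ S)` of a finite collection of sets. -/
noncomputable def flatSum (Sig : Finset (Set α)) : ℤ :=
  ∑ S ∈ Sig.powerset.filter (· ≠ ∅),
    (-1) ^ (S.card + 1) * (G.sdim (⋂₀ ↑S) : ℤ)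

/-- `P ⊑* Q`: for the subpregeometries induced on `P ⊆ Q`, the dimension of the
intersection of two closed sets of `P` equals the dimension of the intersection
of their closures in `Q` (the closure of `X` in `Q` being `cl X ∩ Q`). -/
def SqStar (P Q : Set α) : Prop := P ⊆ Q ∧
  ∀ X₁ X₂ : Set α, G.IsClosedIn P X₁ → G.IsClosedIn P X₂ →
    G.edim (X₁ ∩ X₂) = G.edim (G.cl X₁ ∩ G.cl X₂ ∩ Q)

/-- `P ⊑ Q`: `P` is strongly embedded in `Q`: for every finite collection `Σ` of
finite-dimensional closed sets of `Q`, `Δ_P(Σ_P) ≤ Δ_Q(Σ)` where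
`Σ_P = {E ∩ P : E ∈ Σ}`. -/
def Sq (P Q : Set α) : Prop := P ⊆ Q ∧
  ∀ Sig : Finset (Set α), (∀ E ∈ Sig, G.IsClosedIn Q E) →
    (∀ E ∈ Sig, G.edim E ≠ ⊤) →
    G.flatSum (Sig.image (· ∩ P)) ≤ G.flatSum Sig

/-- The subpregeometry induced on `P` is flat: every finite collection of
finite-dimensional closed sets satisfies `d(⋃ Σ) ≤ Δ(Σ)`. -/
def FlatIn (P : Set α) : Prop :=
  ∀ Sig : Finset (Set α), (∀ E ∈ Sig, G.IsClosedIn P E) →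
    (∀ E ∈ Sig, G.edim E ≠ ⊤) →
    (G.sdim (⋃₀ ↑Sig) : ℤ) ≤ G.flatSum Sig

/-- The α-function of the subpregeometry of `G` induced on `P`:
`α(X) = |X| − d(X) − Σ_{Y ⊊ X closed} α(Y)`. -/
noncomputable def alphaIn (P : Set α) (X : Finset α) : ℤ :=
  (X.card : ℤ) - (G.dim X : ℤ) -
    ∑ Y ∈ (X.powerset.filter fun Y => Y ≠ X ∧ G.IsClosedIn P ↑Y).attach,
      alphaIn P Y.1
termination_by X.card
decreasing_by
  have h := Y.2
  simp only [Finset.mem_filter, Finset.mem_powerset] at h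
  exact Finset.card_lt_card (lt_of_le_of_ne h.1 h.2.1)

end Pregeometry

/-- A hypergraph on the vertex type `α`: a set of nonempty finite edges. -/
structure Hypergraph' (α : Type*) where
  edges : Set (Finset α)
  nonempty_edges : ∀ e ∈ edges, e ≠ ∅

namespace Hypergraph'

variable {α : Type*} [DecidableEq α] (A : Hypergraph' α)

/-- The set of edges contained in a set of vertices. -/
def edgesIn (P : Set α) : Set (Finset α) := {e | e ∈ A.edges ∧ ↑e ⊆ P}

/-- The predimension `δ(P) = |P| − |R[P]|` of a finite set of vertices. -/
noncomputable def delta (P : Finset α) : ℤ :=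
  (P.card : ℤ) - (A.edgesIn ↑P).ncard

/-- The relative predimension `δ(L/P) = |L∖P| − |R[L∪P]∖R[P]|`. -/
noncomputable def deltaRel (L : Finset α) (P : Set α) : ℤ :=
  ((↑L \ P : Set α).ncard : ℤ) -
    ({e | e ∈ A.edges ∧ ↑e ⊆ ↑L ∪ P ∧ ¬ ↑e ⊆ P} : Set (Finset α)).ncard

/-- `P` is self-sufficient in `A`: `δ(X/P) ≥ 0` for every finite `X`, stated so
as to be meaningful even when infinitely many edges are involved. -/
def SelfSuff (P : Set α) : Prop :=
  ∀ X : Finset α, ∀ Es : Finset (Finset α),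
    (∀ e ∈ Es, e ∈ A.edges ∧ ↑e ⊆ ↑X ∪ P ∧ ¬ ↑e ⊆ P) →
    (Es.card : ℤ) ≤ ((↑X \ P : Set α).ncard : ℤ)

/-- The dimension function associated to a hypergraph:
`d(X) = inf {δ(B) : X ⊆ B finite}`. -/
noncomputable def hdim (X : Finset α) : ℤ :=
  sInf {d : ℤ | ∃ B : Finset α, X ⊆ B ∧ d = A.delta B}

/-- The induced subhypergraph on a set `P` of vertices (keeping `α` as the
ambient vertex type). -/
def restrict (P : Set α) : Hypergraph' α :=
  ⟨{e | e ∈ A.edges ∧ ↑e ⊆ P}, fun e he => A.nonempty_edges e he.1⟩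

/-- A pregeometry `G` is represented by the hypergraph `A` if the associated
dimension function of `A` is the dimension function of `G`. -/
def Represents (G : Pregeometry α) : Prop :=
  ∀ X : Finset α, (G.dim X : ℤ) = A.hdim X

end Hypergraph'
namespace Pregeometry

variable {α : Type*} [DecidableEq α] (G : Pregeometry α)

lemma dim_union_le_left (A C : Finset α) : G.dim A ≤ G.dim (A ∪ C) := by
  induction C using Finset.induction_on with
  | empty => simp
  | @insert x C hx ih =>
      calc G.dim A ≤ G.dim (A ∪ C) := ih
      _ ≤ G.dim (insert x (A ∪ C)) := G.dim_le_insert _ _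
      _ = G.dim (A ∪ insert x C) := by rw [Finset.union_insert]

lemma dim_mono {A B : Finset α} (h : A ⊆ B) : G.dim A ≤ G.dim B := by
  have := G.dim_union_le_left A B
  rwa [Finset.union_eq_right.mpr h] at this

lemma dim_insert_of {A B : Finset α} {x : α} (hAB : A ⊆ B)
    (h : G.dim (insert x A) = G.dim A) : G.dim (insert x B) = G.dim B := by
  have hs := G.submodular (insert x A) B
  have hu : insert x A ∪ B = insert x B := by
    rw [Finset.insert_union, Finset.union_eq_right.mpr hAB]
  have hi : A ⊆ insert x A ∩ B := Finset.subset_inter (Finset.subset_insert x A) hAB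
  have h1 := G.dim_mono hi
  rw [hu] at hs
  have h2 : G.dim (insert x B) ≤ G.dim B := by omega
  exact le_antisymm h2 (G.dim_le_insert B x)

lemma subset_cl (Y : Set α) : Y ⊆ G.cl Y := by
  intro x hx
  refine ⟨{x}, by simpa using hx, ?_⟩
  rw [Finset.insert_eq_self.mpr (Finset.mem_singleton_self x)]

lemma cl_mono {Y Z : Set α} (h : Y ⊆ Z) : G.cl Y ⊆ G.cl Z := by
  rintro x ⟨A, hA, hd⟩
  exact ⟨A, hA.trans h, hd⟩

lemma mem_cl_finset {B C : Finset α} {x : α} (hCB : C ⊆ B)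
    (h : G.dim (insert x C) = G.dim C) : x ∈ G.cl ↑B :=
  ⟨B, subset_rfl, G.dim_insert_of hCB h⟩

lemma dim_union_cl {B A : Finset α} (hA : ↑A ⊆ G.cl ↑B) : G.dim (A ∪ B) = G.dim B := by
  induction A using Finset.induction_on with
  | empty => simp
  | @insert x A hx ih =>
    obtain ⟨C, hC, hd⟩ := hA (show x ∈ (↑(insert x A) : Set α) by simp)
    have hCB : C ⊆ B := Finset.coe_subset.mp hC
    have ih' := ih (fun y hy => hA (by simp [hy]))
    rw [Finset.insert_union,
      G.dim_insert_of (hCB.trans Finset.subset_union_right) hd]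
    exact ih'

lemma cl_idem_finset {B : Finset α} : G.cl (G.cl ↑B) ⊆ G.cl ↑B := by
  rintro x ⟨A, hA, hd⟩
  have h1 : G.dim (insert x (A ∪ B)) = G.dim (A ∪ B) :=
    G.dim_insert_of Finset.subset_union_left hd
  have h2 : G.dim (A ∪ B) = G.dim B := G.dim_union_cl hA
  have h3 : G.dim (insert x B) = G.dim B := by
    refine le_antisymm ?_ (G.dim_le_insert B x)
    calc G.dim (insert x B) ≤ G.dim (insert x (A ∪ B)) :=
          G.dim_mono (Finset.insert_subset_insert x Finset.subset_union_right)
    _ = G.dim B := by rw [h1, h2]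
  exact ⟨B, subset_rfl, h3⟩

lemma coe_dim_le_edim {A : Finset α} {Y : Set α} (h : ↑A ⊆ Y) :
    (G.dim A : ℕ∞) ≤ G.edim Y :=
  le_iSup₂_of_le A h le_rfl

lemma edim_mono {Y Z : Set α} (h : Y ⊆ Z) : G.edim Y ≤ G.edim Z :=
  iSup₂_le fun A hA => G.coe_dim_le_edim (hA.trans h)

lemma edim_le {Y : Set α} {n : ℕ} (h : ∀ A : Finset α, ↑A ⊆ Y → G.dim A ≤ n) :
    G.edim Y ≤ n :=
  iSup₂_le fun A hA => Nat.cast_le.mpr (h A hA)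

lemma edim_cl_coe (B : Finset α) : G.edim (G.cl ↑B) = G.dim B := by
  refine le_antisymm (G.edim_le fun A hA => ?_) (G.coe_dim_le_edim (G.subset_cl _))
  calc G.dim A ≤ G.dim (A ∪ B) := G.dim_mono Finset.subset_union_left
  _ = G.dim B := G.dim_union_cl hA

lemma sdim_coe {Y : Set α} (h : G.edim Y ≠ ⊤) : (G.sdim Y : ℕ∞) = G.edim Y :=
  ENat.coe_toNat h

lemma dim_le_sdim {A : Finset α} {Y : Set α} (hA : ↑A ⊆ Y) (h : G.edim Y ≠ ⊤) :
    G.dim A ≤ G.sdim Y := by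
  have h1 := G.coe_dim_le_edim hA
  rw [← G.sdim_coe h] at h1
  exact_mod_cast h1

lemma sdim_mono {Y Z : Set α} (hYZ : Y ⊆ Z) (h : G.edim Z ≠ ⊤) :
    G.sdim Y ≤ G.sdim Z :=
  ENat.toNat_le_toNat (G.edim_mono hYZ) h

lemma isClosedIn_cl_inter {B : Finset α} {Q : Set α} :
    G.IsClosedIn Q (G.cl ↑B ∩ Q) := by
  refine ⟨Set.inter_subset_right, Set.Subset.antisymm ?_ ?_⟩
  · rintro x ⟨hx, hxQ⟩
    exact ⟨G.cl_idem_finset (G.cl_mono Set.inter_subset_left hx), hxQ⟩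
  · intro x hx
    exact ⟨G.subset_cl _ hx, hx.2⟩

lemma exists_finset_cl {Y : Set α} (A : Finset α) (hA : ↑A ⊆ G.cl Y) :
    ∃ B : Finset α, ↑B ⊆ Y ∧ ↑A ⊆ G.cl ↑B := by
  induction A using Finset.induction_on with
  | empty => exact ⟨∅, by simp, by simp⟩
  | @insert x A hx ih =>
    obtain ⟨B, hBY, hAB⟩ := ih (fun y hy => hA (by simp [hy]))
    obtain ⟨C, hCY, hd⟩ := hA (show x ∈ (↑(insert x A) : Set α) by simp)
    refine ⟨B ∪ C, ?_, ?_⟩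
    · push_cast
      exact Set.union_subset hBY hCY
    · intro y hy
      simp only [Finset.coe_insert, Set.mem_insert_iff] at hy
      rcases hy with rfl | hy
      · exact G.mem_cl_finset Finset.subset_union_right hd
      · exact G.cl_mono (Finset.coe_subset.mpr Finset.subset_union_left) (hAB hy)

lemma flatSum_singleton (E : Set α) : G.flatSum {E} = G.sdim E := by
  unfold flatSum
  have hset : ({E} : Finset (Set α)).powerset.filter (· ≠ ∅) = {{E}} := by
    ext S
    simp only [Finset.mem_filter, Finset.mem_powerset, Finset.subset_singleton_iff,
      Finset.mem_singleton]
    constructor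
    · rintro ⟨rfl | rfl, hne⟩
      · exact absurd rfl hne
      · rfl
    · rintro rfl
      exact ⟨Or.inr rfl, Finset.singleton_ne_empty E⟩
  rw [hset]
  simp

lemma flatSum_pair {E₁ E₂ : Set α} (h : E₁ ≠ E₂) :
    G.flatSum {E₁, E₂} = (G.sdim E₁ : ℤ) + G.sdim E₂ - G.sdim (E₁ ∩ E₂) := by
  unfold flatSum
  have hset : ({E₁, E₂} : Finset (Set α)).powerset.filter (· ≠ ∅) =
      {{E₁}, {E₂}, {E₁, E₂}} := by
    ext S
    simp only [Finset.mem_filter, Finset.mem_powerset, Finset.mem_insert,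
      Finset.mem_singleton]
    constructor
    · rintro ⟨hsub, hne⟩
      by_cases h1 : E₁ ∈ S <;> by_cases h2 : E₂ ∈ S
      · right; right
        apply Finset.Subset.antisymm hsub
        intro y hy
        rcases Finset.mem_insert.mp hy with rfl | hy
        · exact h1
        · rw [Finset.mem_singleton.mp hy]; exact h2
      · left
        apply Finset.Subset.antisymm
        · intro y hy
          rcases Finset.mem_insert.mp (hsub hy) with rfl | hy'
          · exact Finset.mem_singleton_self _
          · exact absurd (Finset.mem_singleton.mp hy' ▸ hy) h2
        · simpa using h1
      · right; left
        apply Finset.Subset.antisymm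
        · intro y hy
          rcases Finset.mem_insert.mp (hsub hy) with rfl | hy'
          · exact absurd hy h1
          · exact hy'
        · simpa using h2
      · exfalso
        apply hne
        ext y
        simp only [Finset.notMem_empty, iff_false]
        intro hy
        rcases Finset.mem_insert.mp (hsub hy) with rfl | hy'
        · exact h1 hy
        · exact h2 (Finset.mem_singleton.mp hy' ▸ hy)
    · rintro (rfl | rfl | rfl) <;>
        refine ⟨?_, ?_⟩ <;>
        simp [Finset.insert_subset_iff, Finset.singleton_ne_empty]
  rw [hset]
  have hne1 : ({E₁} : Finset (Set α)) ∉ ({{E₂}, {E₁, E₂}} : Finset (Finset (Set α))) := by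
    simp only [Finset.mem_insert, Finset.mem_singleton]
    push_neg
    constructor
    · intro hc; exact h (Finset.singleton_injective hc)
    · intro hc
      have hmem : E₂ ∈ ({E₁} : Finset (Set α)) := hc ▸ (by simp)
      exact h (Finset.mem_singleton.mp hmem).symm
  have hne2 : ({E₂} : Finset (Set α)) ∉ ({{E₁, E₂}} : Finset (Finset (Set α))) := by
    simp only [Finset.mem_singleton]
    intro hc
    have hmem : E₁ ∈ ({E₂} : Finset (Set α)) := hc ▸ (by simp)
    exact h (Finset.mem_singleton.mp hmem)
  rw [Finset.sum_insert hne1, Finset.sum_insert hne2, Finset.sum_singleton]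
  have hcard : ({E₁, E₂} : Finset (Set α)).card = 2 := by
    rw [Finset.card_insert_of_notMem (by simpa using h), Finset.card_singleton]
  have hsI : ⋂₀ (↑({E₁, E₂} : Finset (Set α)) : Set (Set α)) = E₁ ∩ E₂ := by
    simp
  simp only [Finset.card_singleton, hcard, hsI, Finset.coe_singleton,
    Set.sInter_singleton]
  ring

end Pregeometry

/-- a strong embedding `H ⊑ G` implies `H ⊑* G`. -/
theorem sqStar_of_sq {α : Type*} [DecidableEq α] (G : Pregeometry α)
    (P Q : Set α) (h : G.Sq P Q) : G.SqStar P Q := by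
  obtain ⟨hPQ, hsq⟩ := h
  refine ⟨hPQ, fun X₁ X₂ hc₁ hc₂ => ?_⟩
  obtain ⟨hX₁P, hX₁⟩ := hc₁
  obtain ⟨hX₂P, hX₂⟩ := hc₂
  refine le_antisymm (G.edim_mono ?_) ?_
  · intro x hx
    exact ⟨⟨G.subset_cl _ hx.1, G.subset_cl _ hx.2⟩, hPQ (hX₁P hx.1)⟩
  · refine iSup₂_le fun A hA => ?_
    obtain ⟨B₁, hB₁X, hAB₁⟩ := G.exists_finset_cl A (fun y hy => (hA hy).1.1)
    obtain ⟨B₂, hB₂X, hAB₂⟩ := G.exists_finset_cl A (fun y hy => (hA hy).1.2)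
    set E₁ := G.cl ↑B₁ ∩ Q with hE₁
    set E₂ := G.cl ↑B₂ ∩ Q with hE₂
    have hB₁Q : (↑B₁ : Set α) ⊆ Q := fun y hy => hPQ (hX₁P (hB₁X hy))
    have hB₂Q : (↑B₂ : Set α) ⊆ Q := fun y hy => hPQ (hX₂P (hB₂X hy))
    have hB₁E : (↑B₁ : Set α) ⊆ E₁ := fun y hy => ⟨G.subset_cl _ hy, hB₁Q hy⟩
    have hB₂E : (↑B₂ : Set α) ⊆ E₂ := fun y hy => ⟨G.subset_cl _ hy, hB₂Q hy⟩
    have hAQ : (↑A : Set α) ⊆ Q := fun y hy => (hA hy).2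
    have hAE : (↑A : Set α) ⊆ E₁ ∩ E₂ := fun y hy => ⟨⟨hAB₁ hy, hAQ hy⟩, hAB₂ hy, hAQ hy⟩
    have hE₁fin : G.edim E₁ ≠ ⊤ := by
      intro ht
      have h1 := (G.edim_mono (Set.inter_subset_left (t := Q))).trans_eq (G.edim_cl_coe B₁)
      rw [ht] at h1
      exact (ENat.coe_lt_top (G.dim B₁)).not_ge h1
    have hE₂fin : G.edim E₂ ≠ ⊤ := by
      intro ht
      have h1 := (G.edim_mono (Set.inter_subset_left (t := Q))).trans_eq (G.edim_cl_coe B₂)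
      rw [ht] at h1
      exact (ENat.coe_lt_top (G.dim B₂)).not_ge h1
    have hsE₁ : G.sdim E₁ = G.dim B₁ := by
      refine le_antisymm ?_ (G.dim_le_sdim hB₁E hE₁fin)
      have h1 : G.edim E₁ ≤ G.dim B₁ :=
        (G.edim_mono Set.inter_subset_left).trans_eq (G.edim_cl_coe B₁)
      rw [← G.sdim_coe hE₁fin] at h1
      exact_mod_cast h1
    have hsE₂ : G.sdim E₂ = G.dim B₂ := by
      refine le_antisymm ?_ (G.dim_le_sdim hB₂E hE₂fin)
      have h1 : G.edim E₂ ≤ G.dim B₂ :=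
        (G.edim_mono Set.inter_subset_left).trans_eq (G.edim_cl_coe B₂)
      rw [← G.sdim_coe hE₂fin] at h1
      exact_mod_cast h1
    have hIfin : G.edim (E₁ ∩ E₂) ≠ ⊤ := fun ht =>
      hE₁fin (top_le_iff.mp (ht ▸ G.edim_mono Set.inter_subset_left))
    have hIPfin : G.edim (E₁ ∩ E₂ ∩ P) ≠ ⊤ := fun ht =>
      hIfin (top_le_iff.mp (ht ▸ G.edim_mono Set.inter_subset_left))
    have hE₁Pfin : G.edim (E₁ ∩ P) ≠ ⊤ := fun ht =>
      hE₁fin (top_le_iff.mp (ht ▸ G.edim_mono Set.inter_subset_left))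
    have hE₂Pfin : G.edim (E₂ ∩ P) ≠ ⊤ := fun ht =>
      hE₂fin (top_le_iff.mp (ht ▸ G.edim_mono Set.inter_subset_left))
    have hB₁EP : (↑B₁ : Set α) ⊆ E₁ ∩ P := fun y hy => ⟨hB₁E hy, hX₁P (hB₁X hy)⟩
    have hB₂EP : (↑B₂ : Set α) ⊆ E₂ ∩ P := fun y hy => ⟨hB₂E hy, hX₂P (hB₂X hy)⟩
    have hp₁ : G.sdim (E₁ ∩ P) = G.dim B₁ :=
      le_antisymm (hsE₁ ▸ G.sdim_mono Set.inter_subset_left hE₁fin)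
        (G.dim_le_sdim hB₁EP hE₁Pfin)
    have hp₂ : G.sdim (E₂ ∩ P) = G.dim B₂ :=
      le_antisymm (hsE₂ ▸ G.sdim_mono Set.inter_subset_left hE₂fin)
        (G.dim_le_sdim hB₂EP hE₂Pfin)
    have hdimA : G.dim A ≤ G.sdim (E₁ ∩ E₂) := G.dim_le_sdim hAE hIfin
    have hkey : G.sdim (E₁ ∩ E₂) ≤ G.sdim (E₁ ∩ E₂ ∩ P) := by
      by_cases hEE : E₁ = E₂
      · rw [hEE, Set.inter_self]
        omega
      · have hclosed : ∀ E ∈ ({E₁, E₂} : Finset (Set α)), G.IsClosedIn Q E := by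
          intro E hE
          rcases Finset.mem_insert.mp hE with rfl | hE
          · exact G.isClosedIn_cl_inter
          · rw [Finset.mem_singleton.mp hE]
            exact G.isClosedIn_cl_inter
        have hfin : ∀ E ∈ ({E₁, E₂} : Finset (Set α)), G.edim E ≠ ⊤ := by
          intro E hE
          rcases Finset.mem_insert.mp hE with rfl | hE
          · exact hE₁fin
          · rw [Finset.mem_singleton.mp hE]
            exact hE₂fin
        have hineq := hsq {E₁, E₂} hclosed hfin
        have himg : ({E₁, E₂} : Finset (Set α)).image (· ∩ P) = {E₁ ∩ P, E₂ ∩ P} := by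
          rw [Finset.image_insert, Finset.image_singleton]
        rw [himg, G.flatSum_pair hEE] at hineq
        by_cases hPP : E₁ ∩ P = E₂ ∩ P
        · have hIP : E₁ ∩ E₂ ∩ P = E₁ ∩ P := by
            ext y
            have hy2 := Set.ext_iff.mp hPP y
            simp only [Set.mem_inter_iff] at hy2 ⊢
            tauto
          rw [hPP, Finset.insert_eq_self.mpr (Finset.mem_singleton_self _)] at hineq
          rw [G.flatSum_singleton] at hineq
          rw [hIP, hp₁]
          have hn : G.dim B₁ = G.dim B₂ := by
            rw [← hp₁, ← hp₂, hPP]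
          rw [hsE₁, hsE₂, hp₂] at hineq
          omega
        · rw [G.flatSum_pair hPP] at hineq
          have hIP : E₁ ∩ P ∩ (E₂ ∩ P) = E₁ ∩ E₂ ∩ P := by
            ext y
            simp only [Set.mem_inter_iff]
            tauto
          rw [hIP, hsE₁, hsE₂, hp₁, hp₂] at hineq
          omega
    have hsub : E₁ ∩ E₂ ∩ P ⊆ X₁ ∩ X₂ := by
      rintro y ⟨⟨⟨hy1, -⟩, ⟨hy2, -⟩⟩, hyP⟩
      constructor
      · rw [← hX₁]
        exact ⟨G.cl_mono hB₁X hy1, hyP⟩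
      · rw [← hX₂]
        exact ⟨G.cl_mono hB₂X hy2, hyP⟩
    have hfinal : (G.dim A : ℕ∞) ≤ (G.sdim (E₁ ∩ E₂ ∩ P) : ℕ∞) := by
      exact_mod_cast hdimA.trans hkey
    calc (G.dim A : ℕ∞) ≤ (G.sdim (E₁ ∩ E₂ ∩ P) : ℕ∞) := hfinal
    _ = G.edim (E₁ ∩ E₂ ∩ P) := G.sdim_coe hIPfin
    _ ≤ G.edim (X₁ ∩ X₂) := G.edim_mono hsub
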